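/- Let v be the bounded linear operator on ℓ²(Y) (Y the set of strictly decreasing l-tuples in ℤ^l) given by (v f)(k) = (1/2)∑_{s=1}^l [f̃(k - e_s) + f̃(k + e_s)], where f̃ is the antisymmetric extension of f to ℤ^l (vanishing on tuples with repeated entries). Then the closed positive cone Ω = {f ∈ ℓ²(Y) : f(k) ≥ 0 for all k} is invariant under the flow of the linear ODE f' = v f: if f(0) ∈ Ω then f(x) ∈ Ω for all x ≥ 0. -/

import Mathlib

open scoped ENNReal

/-- The antisymmetric extension of a function on strictly decreasing tuples to all
of `ℤ^l`: it vanishes on tuples with repeated entries, and on an injective tuple `k`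
it equals `sign(σ) · f(k ∘ σ)` where `k ∘ σ` is strictly decreasing. -/
noncomputable def asymExt {l : ℕ} (f : {k : Fin l → ℤ // StrictAnti k} → ℝ)
    (k : Fin l → ℤ) : ℝ :=
  if h : ∃ σ : Equiv.Perm (Fin l), StrictAnti (k ∘ σ) then
    (Equiv.Perm.sign h.choose : ℤ) * f ⟨k ∘ h.choose, h.choose_spec⟩
  else 0

section aux

variable {l : ℕ}

lemma perm_eq_one_of_strictAnti {k : Fin l → ℤ} (hk : StrictAnti k)
    (σ : Equiv.Perm (Fin l)) (hσ : StrictAnti (k ∘ σ)) : σ = 1 := by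
  have hmono : StrictMono (σ : Fin l → Fin l) := by
    intro i j hij
    exact (hk.lt_iff_gt).mp (hσ hij)
  ext i
  have := Fin.coe_orderIso_apply (StrictMono.orderIsoOfSurjective _ hmono σ.surjective) i
  rw [StrictMono.coe_orderIsoOfSurjective] at this
  simpa [Fin.ext_iff] using this

lemma asymExt_of_strictAnti (f : {k : Fin l → ℤ // StrictAnti k} → ℝ)
    {k : Fin l → ℤ} (hk : StrictAnti k) : asymExt f k = f ⟨k, hk⟩ := by
  have hex : ∃ σ : Equiv.Perm (Fin l), StrictAnti (k ∘ σ) := ⟨1, by simpa using hk⟩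
  rw [asymExt, dif_pos hex]
  have h1 : hex.choose = 1 := perm_eq_one_of_strictAnti hk _ hex.choose_spec
  have h2 : k ∘ ⇑hex.choose = k := by
    funext i; rw [h1]; simp
  rw [show (⟨k ∘ ⇑hex.choose, hex.choose_spec⟩ : {k : Fin l → ℤ // StrictAnti k}) = ⟨k, hk⟩
    from Subtype.ext h2, h1]
  simp

lemma asymExt_of_not_injective (f : {k : Fin l → ℤ // StrictAnti k} → ℝ)
    {k : Fin l → ℤ} (hk : ¬ Function.Injective k) : asymExt f k = 0 := by
  rw [asymExt, dif_neg]
  rintro ⟨σ, hσ⟩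
  refine hk ?_
  have h1 : Function.Injective (k ∘ σ) := hσ.injective
  have hkk : k = (k ∘ σ) ∘ σ.symm := by funext i; simp
  rw [hkk]
  exact h1.comp σ.symm.injective

lemma strictAnti_update {k : Fin l → ℤ} (hk : StrictAnti k) (s : Fin l) (c : ℤ)
    (hc : c = k s - 1 ∨ c = k s + 1)
    (hinj : Function.Injective (Function.update k s c)) :
    StrictAnti (Function.update k s c) := by
  have hne : ∀ t : Fin l, t ≠ s → k t ≠ c := by
    intro t ht h
    apply ht
    apply hinj
    rw [Function.update_of_ne ht, Function.update_self, h]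
  intro i j hij
  rw [Function.update_apply, Function.update_apply]
  by_cases hi : i = s
  · by_cases hj : j = s
    · exact absurd (hi.trans hj.symm) (ne_of_lt hij)
    · simp only [hi, if_pos rfl, if_neg hj]
      have h1 : k j < k s := by rw [← hi]; exact hk hij
      have h2 := hne j hj
      rcases hc with rfl | rfl <;> omega
  · by_cases hj : j = s
    · simp only [if_neg hi, hj, if_pos rfl]
      have h1 : k s < k i := by rw [← hj]; exact hk hij
      have h2 := hne i hi
      rcases hc with rfl | rfl <;> omega
    · simp only [if_neg hi, if_neg hj]
      exact hk hij

lemma asymExt_update_nonneg (f : {k : Fin l → ℤ // StrictAnti k} → ℝ)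
    (hf : ∀ k, 0 ≤ f k) {k : Fin l → ℤ} (hk : StrictAnti k) (s : Fin l) (c : ℤ)
    (hc : c = k s - 1 ∨ c = k s + 1) :
    0 ≤ asymExt f (Function.update k s c) := by
  by_cases hinj : Function.Injective (Function.update k s c)
  · rw [asymExt_of_strictAnti f (strictAnti_update hk s c hc hinj)]
    exact hf _
  · rw [asymExt_of_not_injective f hinj]

end aux

set_option maxHeartbeats 1000000 in
set_option synthInstance.maxHeartbeats 400000 in
open NormedSpace in
theorem positive_cone_invariant (l : ℕ) (hl : 1 ≤ l)
    (v : lp (fun _ : {k : Fin l → ℤ // StrictAnti k} => ℝ) 2 →L[ℝ]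
         lp (fun _ : {k : Fin l → ℤ // StrictAnti k} => ℝ) 2)
    (hv : ∀ f, ∀ k : {k : Fin l → ℤ // StrictAnti k},
      (v f) k = (∑ s : Fin l,
        (asymExt (fun k' => f k') (Function.update k.1 s (k.1 s - 1)) +
         asymExt (fun k' => f k') (Function.update k.1 s (k.1 s + 1)))) / 2)
    (φ : ℝ → lp (fun _ : {k : Fin l → ℤ // StrictAnti k} => ℝ) 2)
    (hode : ∀ x : ℝ, HasDerivAt φ (v (φ x)) x)
    (h0 : ∀ k, 0 ≤ φ 0 k) :
    ∀ x : ℝ, 0 ≤ x → ∀ k, 0 ≤ φ x k := by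
  -- v preserves the positive cone
  have hpos : ∀ f, (∀ k, 0 ≤ f k) → ∀ k, 0 ≤ v f k := by
    intro f hf k
    rw [hv f k]
    apply div_nonneg _ (by norm_num)
    apply Finset.sum_nonneg
    intro s _
    have h1 := asymExt_update_nonneg (fun k' => f k') hf k.2 s (k.1 s - 1) (Or.inl rfl)
    have h2 := asymExt_update_nonneg (fun k' => f k') hf k.2 s (k.1 s + 1) (Or.inr rfl)
    linarith
  -- iterates of v preserve the positive cone
  have hpow : ∀ n : ℕ, ∀ f, (∀ k, 0 ≤ f k) → ∀ k, 0 ≤ (v ^ n) f k := by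
    intro n
    induction n with
    | zero => intro f hf k; simpa using hf k
    | succ n ih =>
      intro f hf k
      rw [pow_succ', ContinuousLinearMap.mul_apply]
      exact hpos _ (ih f hf) k
  -- coordinate evaluation as a continuous linear map
  have eval_exists : ∀ k : {k : Fin l → ℤ // StrictAnti k},
      ∃ L : lp (fun _ : {k : Fin l → ℤ // StrictAnti k} => ℝ) 2 →L[ℝ] ℝ,
        ∀ g, L g = g k := by
    intro k
    refine ⟨LinearMap.mkContinuous
      { toFun := fun g : lp (fun _ : {k : Fin l → ℤ // StrictAnti k} => ℝ) 2 => g k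
        map_add' := fun g h => by simp [lp.coeFn_add]
        map_smul' := fun c g => by simp [lp.coeFn_smul] } 1
      (fun g => by rw [one_mul]; exact lp.norm_apply_le_norm (by norm_num : (2 : ℝ≥0∞) ≠ 0) g k),
      fun g => rfl⟩
  -- the flow given by the exponential
  set ψ : ℝ → lp (fun _ : {k : Fin l → ℤ // StrictAnti k} => ℝ) 2 :=
    fun t => (exp (t • v)) (φ 0) with hψ
  have hψpos : ∀ t : ℝ, 0 ≤ t → ∀ k, 0 ≤ ψ t k := by
    intro t ht k
    obtain ⟨L, hL⟩ := eval_exists k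
    have hsum := expSeries_summable' (𝕂 := ℝ) (t • v)
    set G := L.comp (ContinuousLinearMap.apply ℝ
      (lp (fun _ : {k : Fin l → ℤ // StrictAnti k} => ℝ) 2) (φ 0)) with hG
    have hGA : ∀ A, G A = (A (φ 0)) k := fun A => hL _
    have h4 : exp (t • v) = ∑' n : ℕ, (Nat.factorial n : ℝ)⁻¹ • (t • v) ^ n := by
      rw [exp_eq_tsum ℝ]
    have hval : ψ t k = ∑' n : ℕ, G ((Nat.factorial n : ℝ)⁻¹ • (t • v) ^ n) := by
      rw [← hGA, h4, G.map_tsum hsum]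
    rw [hval]
    apply tsum_nonneg
    intro n
    rw [hGA]
    have h1 : ∀ g, 0 ≤ (((Nat.factorial n : ℝ)⁻¹ • (t • v) ^ n) g) k ↔
        0 ≤ (Nat.factorial n : ℝ)⁻¹ * (t ^ n * ((v ^ n) g k)) := by
      intro g
      rw [smul_pow, ContinuousLinearMap.smul_apply, ContinuousLinearMap.smul_apply,
        lp.coeFn_smul, lp.coeFn_smul]
      simp [smul_eq_mul]
    rw [h1]
    have hp := hpow n (φ 0) h0 k
    positivity
  -- ψ solves the same ODE
  have hψode : ∀ t : ℝ, HasDerivAt ψ (v (ψ t)) t := by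
    intro t
    have h1 : HasDerivAt (fun u : ℝ => exp (u • v)) (v * exp (t • v)) t :=
      hasDerivAt_exp_smul_const' v t
    have h2 := h1.clm_apply (hasDerivAt_const t (φ 0))
    simp only [add_zero, ContinuousLinearMap.map_zero] at h2
    have h3 : (v * exp (t • v)) (φ 0) = v (ψ t) := by
      rw [ContinuousLinearMap.mul_apply]
    rw [h3] at h2
    exact h2
  have hψ0 : φ 0 = ψ 0 := by
    rw [hψ]
    simp only [zero_smul, exp_zero, ContinuousLinearMap.one_apply]
  -- uniqueness of solutions
  intro x hx k
  have huniq : φ x = ψ x := by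
    rcases eq_or_lt_of_le hx with rfl | hx'
    · exact hψ0
    · exact ODE_solution_unique (v := fun _ => (v : _ → _)) (K := ‖v‖₊)
        (f := φ) (g := ψ) (a := 0) (b := x)
        (fun _ => v.lipschitz)
        (fun t _ => (hode t).continuousAt.continuousWithinAt)
        (fun t _ => (hode t).hasDerivWithinAt)
        (fun t _ => (hψode t).continuousAt.continuousWithinAt)
        (fun t _ => (hψode t).hasDerivWithinAt)
        hψ0 (Set.mem_Icc.mpr ⟨hx, le_refl x⟩)
  rw [huniq]
  exact hψpos x hx k
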